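/- Transport for swap: let y ∈ G(u,u) and z ∈ G(v,v) be endomorphisms in a Garside groupoid conjugate by a positive morphism α ∈ C(u,v), so y^α = z. Writing reduced left-fraction decompositions y = f⁻¹g and z = h⁻¹k, the transport α^(1) := fαh⁻¹ satisfies α^(1) = fαh⁻¹ = gαk⁻¹ = fα ∧ gα, and sw(y)^{α^(1)} = sw(z). -/

import Mathlib

open CategoryTheory

/-- A (homogeneous) Garside groupoid: the enveloping groupoid `G` of a Garside category
`(C, φ, Δ)` with finitely many simple morphisms.  `Pos` is the predicate of being a
positive morphism (i.e. lying in `C`), `Simple` the predicate of being simple, every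
morphism has a (reduced) left-fraction decomposition `x = (fracDen x)⁻¹ ≫ fracNum x`,
morphisms with a common source have a left gcd `meet` and a right lcm `join`, and `φ`
is the Garside automorphism. -/
structure GarsideGroupoid where
  Obj : Type*
  [grpd : Groupoid Obj]
  Pos : ∀ {a b : Obj}, (a ⟶ b) → Prop
  pos_id : ∀ a : Obj, Pos (𝟙 a)
  pos_comp : ∀ {a b c : Obj} (f : a ⟶ b) (g : b ⟶ c), Pos f → Pos g → Pos (f ≫ g)
  Simple : ∀ {a b : Obj}, (a ⟶ b) → Prop
  simple_pos : ∀ {a b : Obj} (f : a ⟶ b), Simple f → Pos f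
  finiteSimples : Finite ((a : Obj) × (b : Obj) × {f : a ⟶ b // Simple f})
  fracObj : ∀ {a b : Obj}, (a ⟶ b) → Obj
  fracDen : ∀ {a b : Obj} (x : a ⟶ b), fracObj x ⟶ a
  fracNum : ∀ {a b : Obj} (x : a ⟶ b), fracObj x ⟶ b
  fracDen_pos : ∀ {a b : Obj} (x : a ⟶ b), Pos (fracDen x)
  fracNum_pos : ∀ {a b : Obj} (x : a ⟶ b), Pos (fracNum x)
  frac_spec : ∀ {a b : Obj} (x : a ⟶ b), x = Groupoid.inv (fracDen x) ≫ fracNum x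
  meetObj : ∀ {u a b : Obj}, (u ⟶ a) → (u ⟶ b) → Obj
  meet : ∀ {u a b : Obj} (f : u ⟶ a) (g : u ⟶ b), u ⟶ meetObj f g
  meet_le_left : ∀ {u a b : Obj} (f : u ⟶ a) (g : u ⟶ b), Pos (Groupoid.inv (meet f g) ≫ f)
  meet_le_right : ∀ {u a b : Obj} (f : u ⟶ a) (g : u ⟶ b), Pos (Groupoid.inv (meet f g) ≫ g)
  le_meet : ∀ {u a b d : Obj} (f : u ⟶ a) (g : u ⟶ b) (h : u ⟶ d),
    Pos (Groupoid.inv h ≫ f) → Pos (Groupoid.inv h ≫ g) → Pos (Groupoid.inv h ≫ meet f g)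
  frac_reduced : ∀ {a b : Obj} (x : a ⟶ b), Pos (Groupoid.inv (meet (fracDen x) (fracNum x)))
  joinObj : ∀ {u a b : Obj}, (u ⟶ a) → (u ⟶ b) → Obj
  join : ∀ {u a b : Obj} (f : u ⟶ a) (g : u ⟶ b), u ⟶ joinObj f g
  le_join_left : ∀ {u a b : Obj} (f : u ⟶ a) (g : u ⟶ b), Pos (Groupoid.inv f ≫ join f g)
  le_join_right : ∀ {u a b : Obj} (f : u ⟶ a) (g : u ⟶ b), Pos (Groupoid.inv g ≫ join f g)
  join_le : ∀ {u a b d : Obj} (f : u ⟶ a) (g : u ⟶ b) (h : u ⟶ d),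
    Pos (Groupoid.inv f ≫ h) → Pos (Groupoid.inv g ≫ h) → Pos (Groupoid.inv (join f g) ≫ h)
  phi : Obj → Obj
  phiMap : ∀ {a b : Obj}, (a ⟶ b) → (phi a ⟶ phi b)
  phiMap_id : ∀ a : Obj, phiMap (𝟙 a) = 𝟙 (phi a)
  phiMap_comp : ∀ {a b c : Obj} (f : a ⟶ b) (g : b ⟶ c), phiMap (f ≫ g) = phiMap f ≫ phiMap g
  phi_pos : ∀ {a b : Obj} (f : a ⟶ b), Pos f → Pos (phiMap f)
  phi_bij : Function.Bijective phi

attribute [instance] GarsideGroupoid.grpd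

namespace GarsideGroupoid

variable (G : GarsideGroupoid)

/-- The endomorphisms of the groupoid, at varying objects. -/
def Endo := (u : G.Obj) × (u ⟶ u)

/-- The (left) swap function, sending an endomorphism `x = f⁻¹ ≫ g` (reduced left fraction)
to `g ≫ f⁻¹`. -/
def sw (x : G.Endo) : G.Endo :=
  ⟨G.fracObj x.2, G.fracNum x.2 ≫ Groupoid.inv (G.fracDen x.2)⟩

/-- An endomorphism is recurrent for swap if it is a fixed point of a positive power of `sw`. -/
def Recurrent (x : G.Endo) : Prop := ∃ m : ℕ, 0 < m ∧ G.sw^[m] x = x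

/-- The prefix order on morphisms with common source: `f ≼ g` iff `f⁻¹ ≫ g` is positive. -/
def Le {u a b : G.Obj} (f : u ⟶ a) (g : u ⟶ b) : Prop := G.Pos (Groupoid.inv f ≫ g)

/-- Conjugation of an endomorphism `x` at `u` by a morphism `α : u ⟶ v`. -/
def conjEnd {u v : G.Obj} (x : u ⟶ u) (α : u ⟶ v) : G.Endo :=
  ⟨v, Groupoid.inv α ≫ x ≫ α⟩

/-- Two endomorphisms are conjugate in the groupoid. -/
def ConjTo (x y : G.Endo) : Prop :=
  ∃ α : x.1 ⟶ y.1, Groupoid.inv α ≫ x.2 ≫ α = y.2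

end GarsideGroupoid

/-- The swap of an endomorphism `x = f⁻¹ ≫ g`, as a morphism `g ≫ f⁻¹` at the object which is
the common source of the reduced left fraction of `x`. -/
def GarsideGroupoid.swMor (G : GarsideGroupoid) {u : G.Obj} (x : u ⟶ u) :
    G.fracObj x ⟶ G.fracObj x :=
  G.fracNum x ≫ Groupoid.inv (G.fracDen x)

/-- Transport for swap: let `y ∈ G(u,u)` and `z ∈ G(v,v)` be endomorphisms conjugate by a
positive morphism `α ∈ C(u,v)`, so `y^α = z`.  Writing the reduced left-fraction
decompositions `y = f⁻¹ g` and `z = h⁻¹ k`, the transport `α⁽¹⁾ := f α h⁻¹` satisfies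
`α⁽¹⁾ = f α h⁻¹ = g α k⁻¹ = (f α) ∧ (g α)` (the latter equality in the lattice sense, i.e.
mutual divisibility with the left gcd), and `sw(y)^{α⁽¹⁾} = sw(z)`. -/
theorem transport_for_swap (G : GarsideGroupoid) {u v : G.Obj}
    (y : u ⟶ u) (z : v ⟶ v) (α : u ⟶ v) (hα : G.Pos α)
    (hconj : Groupoid.inv α ≫ y ≫ α = z) :
    G.fracDen y ≫ α ≫ Groupoid.inv (G.fracDen z) =
        G.fracNum y ≫ α ≫ Groupoid.inv (G.fracNum z) ∧
    G.Le (G.fracDen y ≫ α ≫ Groupoid.inv (G.fracDen z))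
        (G.meet (G.fracDen y ≫ α) (G.fracNum y ≫ α)) ∧
    G.Le (G.meet (G.fracDen y ≫ α) (G.fracNum y ≫ α))
        (G.fracDen y ≫ α ≫ Groupoid.inv (G.fracDen z)) ∧
    Groupoid.inv (G.fracDen y ≫ α ≫ Groupoid.inv (G.fracDen z)) ≫ G.swMor y ≫
        (G.fracDen y ≫ α ≫ Groupoid.inv (G.fracDen z)) = G.swMor z := by
  have hy : y = Groupoid.inv (G.fracDen y) ≫ G.fracNum y := G.frac_spec y
  have hz : z = Groupoid.inv (G.fracDen z) ≫ G.fracNum z := G.frac_spec z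
  simp only [Groupoid.inv_eq_inv] at hconj hy hz ⊢
  unfold GarsideGroupoid.Le GarsideGroupoid.swMor
  simp only [Groupoid.inv_eq_inv]
  set f := G.fracDen y with hf
  set g := G.fracNum y with hg
  set h := G.fracDen z with hh
  set k := G.fracNum z with hk
  have hhp : G.Pos h := G.fracDen_pos z
  have hkp : G.Pos k := G.fracNum_pos z
  have hred : G.Pos (inv (G.meet h k)) := by
    have := G.frac_reduced z
    rwa [Groupoid.inv_eq_inv] at this
  clear_value f g h k
  have key : g ≫ α = f ≫ α ≫ inv h ≫ k := by
    have h2 : f ≫ (inv f ≫ g) ≫ α = f ≫ α ≫ inv h ≫ k := by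
      rw [← hy, ← hz, ← hconj]; simp
    simpa using h2
  have key2 : ∀ {c : G.Obj} (t : v ⟶ c), g ≫ α ≫ t = f ≫ α ≫ inv h ≫ k ≫ t := by
    intro c t
    calc g ≫ α ≫ t = (g ≫ α) ≫ t := by simp
    _ = (f ≫ α ≫ inv h ≫ k) ≫ t := by rw [key]
    _ = f ≫ α ≫ inv h ≫ k ≫ t := by simp
  have part1 : f ≫ α ≫ inv h = g ≫ α ≫ inv k := by
    rw [key2]; simp
  refine ⟨part1, ?_, ?_, ?_⟩
  · -- β ≼ meet
    have e1 : inv (f ≫ α ≫ inv h) ≫ f ≫ α = h := by simp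
    have c1 := congrArg (fun t => inv (f ≫ α ≫ inv h) ≫ t) key
    have e2 : inv (f ≫ α ≫ inv h) ≫ g ≫ α = k := by
      rw [c1]; simp
    have := G.le_meet (f ≫ α) (g ≫ α) (f ≫ α ≫ inv h)
      (by rw [Groupoid.inv_eq_inv, e1]; exact hhp)
      (by rw [Groupoid.inv_eq_inv, e2]; exact hkp)
    rwa [Groupoid.inv_eq_inv] at this
  · -- meet ≼ β
    have hp : G.Pos (inv (G.meet (f ≫ α) (g ≫ α)) ≫ f ≫ α) := by
      have := G.meet_le_left (f ≫ α) (g ≫ α)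
      rwa [Groupoid.inv_eq_inv] at this
    have hq : G.Pos (inv (G.meet (f ≫ α) (g ≫ α)) ≫ g ≫ α) := by
      have := G.meet_le_right (f ≫ α) (g ≫ α)
      rwa [Groupoid.inv_eq_inv] at this
    have c2 := congrArg (fun t => inv (G.meet (f ≫ α) (g ≫ α)) ≫ t) key
    have hwh : G.Pos (inv (inv (f ≫ α ≫ inv h) ≫ G.meet (f ≫ α) (g ≫ α)) ≫ h) := by
      have e : inv (inv (f ≫ α ≫ inv h) ≫ G.meet (f ≫ α) (g ≫ α)) ≫ h =
          inv (G.meet (f ≫ α) (g ≫ α)) ≫ f ≫ α := by simp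
      rw [e]; exact hp
    have hwk : G.Pos (inv (inv (f ≫ α ≫ inv h) ≫ G.meet (f ≫ α) (g ≫ α)) ≫ k) := by
      have e : inv (inv (f ≫ α ≫ inv h) ≫ G.meet (f ≫ α) (g ≫ α)) ≫ k =
          inv (G.meet (f ≫ α) (g ≫ α)) ≫ g ≫ α := by
        rw [c2]; simp
      rw [e]; exact hq
    have hwm : G.Pos (inv (inv (f ≫ α ≫ inv h) ≫ G.meet (f ≫ α) (g ≫ α)) ≫ G.meet h k) := by
      have := G.le_meet h k (inv (f ≫ α ≫ inv h) ≫ G.meet (f ≫ α) (g ≫ α))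
        (by rw [Groupoid.inv_eq_inv]; exact hwh)
        (by rw [Groupoid.inv_eq_inv]; exact hwk)
      rwa [Groupoid.inv_eq_inv] at this
    have hfinal : inv (G.meet (f ≫ α) (g ≫ α)) ≫ f ≫ α ≫ inv h =
        (inv (inv (f ≫ α ≫ inv h) ≫ G.meet (f ≫ α) (g ≫ α)) ≫ G.meet h k) ≫
          inv (G.meet h k) := by simp
    rw [hfinal]
    exact G.pos_comp _ _ hwm hred
  · -- conjugation of swaps
    have e : (g ≫ inv f) ≫ f ≫ α ≫ inv h = g ≫ α ≫ inv h := by simp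
    calc inv (f ≫ α ≫ inv h) ≫ (g ≫ inv f) ≫ f ≫ α ≫ inv h
        = inv (f ≫ α ≫ inv h) ≫ g ≫ α ≫ inv h := by rw [e]
    _ = inv (f ≫ α ≫ inv h) ≫ f ≫ α ≫ inv h ≫ k ≫ inv h := by rw [key2]
    _ = k ≫ inv h := by simp
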